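/- For any quandle (X,◁), the abelianization of its structure group G(X,◁) is isomorphic to the free abelian group on the set of orbits of (X,◁), via the isomorphism induced by sending the generator g_a to the basis element indexed by the orbit of a. -/

import Mathlib

variable {X : Type*}

/-- Quandle axioms for a binary operation `op` (right-translation convention):
self-distributivity, bijectivity of right translations, idempotence. -/
structure IsQuandleOp (op : X → X → X) : Prop where
  sd : ∀ a b c, op (op a b) c = op (op a c) (op b c)
  bij : ∀ b, Function.Bijective fun a => op a b
  idem : ∀ a, op a a = a

/-- A quandle operation is abelian if `(a ◁ b) ◁ c = (a ◁ c) ◁ b`. -/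
def IsAbelianOp (op : X → X → X) : Prop :=
  ∀ a b c, op (op a b) c = op (op a c) b

/-- The smallest equivalence relation identifying `a` with `op a b`. -/
def orbitRel (op : X → X → X) : X → X → Prop :=
  Relation.EqvGen fun a b => ∃ c, op a c = b

/-- The setoid of orbits of a quandle. -/
def orbitSetoid (op : X → X → X) : Setoid X :=
  ⟨orbitRel op, Relation.EqvGen.is_equivalence _⟩

/-- The relators `g_a g_b (g_b g_{a ◁ b})⁻¹` of the structure group. -/
def structureRels (op : X → X → X) : Set (FreeGroup X) :=
  {w | ∃ a b : X,
    w = FreeGroup.of a * FreeGroup.of b * (FreeGroup.of b * FreeGroup.of (op a b))⁻¹}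

/-- The structure group `⟨g_a, a ∈ X | g_a g_b = g_b g_{a ◁ b}⟩` of a quandle. -/
abbrev StructureGroup (op : X → X → X) : Type _ := PresentedGroup (structureRels op)

/-- For any quandle, the abelianization of its structure group is
isomorphic to the free abelian group on the set of orbits, via `g_a ↦ [orbit of a]`. -/
theorem abelianization_structureGroup {X : Type*} (op : X → X → X)
    (hq : IsQuandleOp op) :
    ∃ e : Abelianization (StructureGroup op) ≃*
        Multiplicative (FreeAbelianGroup (Quotient (orbitSetoid op))),
      ∀ a : X, e (Abelianization.of (PresentedGroup.of a)) =
        Multiplicative.ofAdd (FreeAbelianGroup.of (Quotient.mk (orbitSetoid op) a)) := by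
  classical
  set Q := Quotient (orbitSetoid op)
  set f : X → Multiplicative (FreeAbelianGroup Q) :=
    fun a => Multiplicative.ofAdd (FreeAbelianGroup.of (Quotient.mk (orbitSetoid op) a)) with hf
  have horb : ∀ a b : X, Quotient.mk (orbitSetoid op) (op a b) = Quotient.mk (orbitSetoid op) a :=
    fun a b => Quotient.sound (Relation.EqvGen.symm _ _ (Relation.EqvGen.rel _ _ ⟨b, rfl⟩))
  have hrel : ∀ r ∈ structureRels op, FreeGroup.lift f r = 1 := by
    rintro r ⟨a, b, rfl⟩
    simp only [map_mul, map_inv, FreeGroup.lift_apply_of, hf, horb a b]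
    rw [mul_inv_eq_one, mul_comm]
  set Φ : Abelianization (StructureGroup op) →* Multiplicative (FreeAbelianGroup Q) :=
    Abelianization.lift (PresentedGroup.toGroup hrel) with hΦ
  -- backward
  have key : ∀ a b : X, (Abelianization.of (PresentedGroup.of a) : Abelianization (StructureGroup op))
      = Abelianization.of (PresentedGroup.of (op a b)) := by
    intro a b
    have h1 : (PresentedGroup.of a * PresentedGroup.of b *
        (PresentedGroup.of b * PresentedGroup.of (op a b))⁻¹ : StructureGroup op) = 1 := by
      have : (FreeGroup.of a * FreeGroup.of b * (FreeGroup.of b * FreeGroup.of (op a b))⁻¹ :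
          FreeGroup X) ∈ Subgroup.normalClosure (structureRels op) :=
        Subgroup.subset_normalClosure ⟨a, b, rfl⟩
      exact (QuotientGroup.eq_one_iff _).2 this
    have h2 : (PresentedGroup.of a * PresentedGroup.of b : StructureGroup op)
        = PresentedGroup.of b * PresentedGroup.of (op a b) := by
      rwa [mul_inv_eq_one] at h1
    have := congrArg (⇑(Abelianization.of (G := StructureGroup op))) h2
    simp only [map_mul] at this
    rw [mul_comm (Abelianization.of (PresentedGroup.of b))] at this
    exact mul_right_cancel this
  set g0 : X → Additive (Abelianization (StructureGroup op)) :=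
    fun a => Additive.ofMul (Abelianization.of (PresentedGroup.of a)) with hg0
  have hconst : ∀ a b : X, orbitRel op a b → g0 a = g0 b := by
    intro a b h
    induction h with
    | rel x y hxy => obtain ⟨c, rfl⟩ := hxy; exact congrArg Additive.ofMul (key x c)
    | refl x => rfl
    | symm x y _ ih => exact ih.symm
    | trans x y z _ _ ih1 ih2 => exact ih1.trans ih2
  set g : Q → Additive (Abelianization (StructureGroup op)) := Quotient.lift g0 hconst with hg
  set Ψ : Multiplicative (FreeAbelianGroup Q) →* Abelianization (StructureGroup op) :=
    AddMonoidHom.toMultiplicativeLeft (FreeAbelianGroup.lift g) with hΨ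
  have hΦof : ∀ a : X, Φ (Abelianization.of (PresentedGroup.of a)) = f a := by
    intro a
    simp [hΦ, Abelianization.lift_apply_of, PresentedGroup.toGroup.of]
  have hΨof : ∀ a : X, Ψ (f a) = Abelianization.of (PresentedGroup.of a) := by
    intro a
    simp [hΨ, hf, FreeAbelianGroup.lift_apply_of, hg, hg0]
  have h1 : Ψ.comp Φ = MonoidHom.id _ := by
    apply Abelianization.hom_ext
    ext a
    simp [MonoidHom.comp_apply, hΦof, hΨof]
  have h2 : Φ.comp Ψ = MonoidHom.id _ := by
    have : (AddMonoidHom.toMultiplicativeLeft.symm ((Φ.comp Ψ))) =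
        AddMonoidHom.toMultiplicativeLeft.symm (MonoidHom.id _) := by
      ext q
      induction q using Quotient.inductionOn with
      | h a =>
        simp only [AddMonoidHom.toMultiplicativeLeft_symm_apply_apply]
        show (Φ (Ψ (f a))).toAdd = _
        rw [hΨof, hΦof]
        rfl
    exact AddMonoidHom.toMultiplicativeLeft.symm.injective this
  exact ⟨MonoidHom.toMulEquiv Φ Ψ h1 h2, fun a => hΦof a⟩
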